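/- Let q be an odd prime power, r ≥ 2 even, N | q^r - 1 with gcd((q^r-1)/(q-1), N) = 2, and let H be the multiplicative subgroup of F_{q^r}^* of order (q^r-1)/N. The group homomorphism φ: F_q^* × H → F_{q^r}^* given by φ(y,z) = yz has kernel {(h, h^{-1}) : h ∈ F_q^* ∩ H}, and F_q^* ∩ H is the subgroup of F_{q^r}^* of order 2(q-1)/N. -/
import Mathlib

open Finset in
lemma myMemIffPow {G : Type*} [Group G] [Fintype G] [IsCyclic G]
    (S : Subgroup G) (x : G) : x ∈ S ↔ x ^ Nat.card S = 1 := by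
  classical
  have fwd : ∀ a : G, a ∈ S → a ^ Nat.card S = 1 := by
    intro a ha
    have h1 : (⟨a, ha⟩ : S) ^ Nat.card S = 1 := pow_card_eq_one'
    have h2 := congrArg Subtype.val h1
    simpa only [SubmonoidClass.coe_pow, OneMemClass.coe_one] using h2
  constructor
  · exact fwd x
  · intro hx
    have hcard : 0 < Nat.card S := Nat.card_pos
    have hle := IsCyclic.card_pow_eq_one_le (α := G) (n := Nat.card S) hcard
    have hsub : (S : Set G).toFinset ⊆ Finset.univ.filter (fun a : G => a ^ Nat.card S = 1) := by
      intro a ha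
      simp only [Set.mem_toFinset, SetLike.mem_coe] at ha
      exact Finset.mem_filter.mpr ⟨Finset.mem_univ a, fwd a ha⟩
    have hcards : ((S : Set G).toFinset).card = Nat.card S := by
      rw [Set.toFinset_card, Nat.card_eq_fintype_card]
      rfl
    have heq := Finset.eq_of_subset_of_card_le hsub (by rw [hcards]; exact hle)
    have hxmem : x ∈ Finset.filter (fun a : G => a ^ Nat.card S = 1) Finset.univ :=
      Finset.mem_filter.mpr ⟨Finset.mem_univ x, hx⟩
    rw [← heq] at hxmem
    simpa using hxmem

lemma myCardInf {G : Type*} [Group G] [Fintype G] [IsCyclic G] (A B : Subgroup G) :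
    Nat.card (A ⊓ B : Subgroup G) = Nat.gcd (Nat.card A) (Nat.card B) := by
  obtain ⟨g0, hg0⟩ := IsCyclic.exists_ofOrder_eq_natCard (α := G)
  set n := Nat.card G with hn
  set d := Nat.gcd (Nat.card A) (Nat.card B) with hdd
  have hA : Nat.card A ∣ n := Subgroup.card_subgroup_dvd_card A
  have hd : d ∣ n := (Nat.gcd_dvd_left _ _).trans hA
  have hd0 : 0 < d := Nat.gcd_pos_of_pos_left _ Nat.card_pos
  have hnd : n / d ∣ n := Nat.div_dvd_of_dvd hd
  set z := g0 ^ (n / d) with hz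
  have hzord : orderOf z = d := by
    rw [hz, orderOf_pow, hg0, Nat.gcd_eq_right hnd, Nat.div_div_self hd]
    exact Nat.card_pos.ne'
  have hZcard : Nat.card (Subgroup.zpowers z) = d := by
    rw [Nat.card_zpowers, hzord]
  have hAB : A ⊓ B = Subgroup.zpowers z := by
    ext x
    rw [Subgroup.mem_inf, myMemIffPow A, myMemIffPow B, myMemIffPow (Subgroup.zpowers z), hZcard]
    constructor
    · rintro ⟨h1, h2⟩
      exact orderOf_dvd_iff_pow_eq_one.mp
        (Nat.dvd_gcd (orderOf_dvd_of_pow_eq_one h1) (orderOf_dvd_of_pow_eq_one h2))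
    · intro h
      have hdvd := orderOf_dvd_of_pow_eq_one h
      exact ⟨orderOf_dvd_iff_pow_eq_one.mp (hdvd.trans (Nat.gcd_dvd_left _ _)),
        orderOf_dvd_iff_pow_eq_one.mp (hdvd.trans (Nat.gcd_dvd_right _ _))⟩
  rw [hAB, hZcard]

lemma myArith (d s N : ℕ) (hd : 0 < d) (hN : 0 < N) (hNdvd : N ∣ d * s)
    (hgcd : Nat.gcd s N = 2) : Nat.gcd d (d * s / N) = 2 * d / N := by
  obtain ⟨s', rfl⟩ : 2 ∣ s := by rw [← hgcd]; exact Nat.gcd_dvd_left s N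
  obtain ⟨n', rfl⟩ : 2 ∣ N := by rw [← hgcd]; exact Nat.gcd_dvd_right _ N
  have hn' : 0 < n' := by omega
  have hcop : Nat.Coprime n' s' := by
    have h := hgcd
    rw [Nat.gcd_mul_left] at h
    have h1 : Nat.gcd s' n' = 1 := by omega
    exact Nat.coprime_comm.mp h1
  have h3 : n' ∣ d * s' := by
    refine Nat.dvd_of_mul_dvd_mul_left (show 0 < 2 by norm_num) ?_
    have e : d * (2 * s') = 2 * (d * s') := by ring
    exact e ▸ hNdvd
  obtain ⟨d', rfl⟩ : n' ∣ d := Nat.Coprime.dvd_of_dvd_mul_right hcop h3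
  have e1 : n' * d' * (2 * s') = 2 * n' * (d' * s') := by ring
  have e2 : 2 * (n' * d') = 2 * n' * d' := by ring
  have hpos : 0 < 2 * n' := by omega
  rw [e1, e2, Nat.mul_div_cancel_left _ hpos, Nat.mul_div_cancel_left _ hpos]
  have hcop1 : Nat.gcd n' s' = 1 := hcop
  calc Nat.gcd (n' * d') (d' * s') = Nat.gcd (n' * d') (s' * d') := by rw [mul_comm d' s']
    _ = Nat.gcd n' s' * d' := Nat.gcd_mul_right _ _ _
    _ = d' := by rw [hcop1, one_mul]

/-- Lemma 4.3: the kernel of the multiplication homomorphism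
`φ : F_q^* × H → F_{q^r}^*`, `(y,z) ↦ yz`, consists of the pairs `(h, h⁻¹)` with
`h ∈ F_q^* ∩ H`, and `F_q^* ∩ H` has order `2(q-1)/N`. -/
theorem kernel_of_mul_hom (q r N : ℕ) (hq : IsPrimePow q) (hodd : Odd q)
    (hr : 2 ≤ r) (hre : Even r) (hN : 0 < N) (hNdvd : N ∣ q ^ r - 1)
    (hgcd : Nat.gcd ((q ^ r - 1) / (q - 1)) N = 2)
    (F : Type*) [Field F] [Fintype F] (hF : Fintype.card F = q ^ r)
    (K : Subfield F) (hK : Nat.card K = q)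
    (H : Subgroup Fˣ) (hH : Nat.card H = (q ^ r - 1) / N) :
    (∀ (y : Kˣ) (z : H), ((y : K) : F) * ((z : Fˣ) : F) = 1 ↔
      ∃ h : Fˣ, (h : F) ∈ K ∧ h ∈ H ∧ ((y : K) : F) = (h : F) ∧ (z : Fˣ) = h⁻¹) ∧
    Nat.card {h : Fˣ // (h : F) ∈ K ∧ h ∈ H} = 2 * (q - 1) / N := by
  classical
  constructor
  · intro y z
    constructor
    · intro hyz
      set h : Fˣ := Units.map K.subtype.toMonoidHom y with hdef
      have hval : (h : F) = ((y : K) : F) := rfl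
      have hhz : h * (z : Fˣ) = 1 := Units.ext (by simpa [hval] using hyz)
      have hz : (z : Fˣ) = h⁻¹ := eq_inv_of_mul_eq_one_right hhz
      have hmem : h ∈ H := by
        have : h = ((z : Fˣ))⁻¹ := by rw [hz, inv_inv]
        rw [this]
        exact H.inv_mem z.2
      exact ⟨h, by rw [hval]; exact SetLike.coe_mem _, hmem, hval.symm, hz⟩
    · rintro ⟨h, hK', hH', hy, hz⟩
      rw [hy, hz]
      have : (h * h⁻¹ : Fˣ) = 1 := mul_inv_cancel h
      calc (h : F) * ((h⁻¹ : Fˣ) : F) = ((h * h⁻¹ : Fˣ) : F) := by rw [Units.val_mul]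
        _ = 1 := by rw [this, Units.val_one]
  · set A : Subgroup Fˣ :=
      { carrier := {u : Fˣ | (u : F) ∈ K}
        one_mem' := K.one_mem
        mul_mem' := fun ha hb => K.mul_mem ha hb
        inv_mem' := fun {a} ha => by
          show ((a⁻¹ : Fˣ) : F) ∈ K
          rw [Units.val_inv_eq_inv_val]
          exact K.inv_mem ha } with hAdef
    have hAcard : Nat.card A = q - 1 := by
      have hekv : A ≃ Kˣ :=
        { toFun := fun u => ⟨⟨((u : Fˣ) : F), u.2⟩, ⟨((((u : Fˣ))⁻¹ : Fˣ) : F), A.inv_mem u.2⟩,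
            Subtype.ext (by simp), Subtype.ext (by simp)⟩
          invFun := fun y => ⟨Units.map K.subtype.toMonoidHom y, SetLike.coe_mem ((y : K))⟩
          left_inv := fun u => Subtype.ext (Units.ext rfl)
          right_inv := fun y => Units.ext (Subtype.ext rfl) }
      rw [Nat.card_congr hekv, Nat.card_units, hK]
    have hsetcard : Nat.card {h : Fˣ // (h : F) ∈ K ∧ h ∈ H}
        = Nat.card (A ⊓ H : Subgroup Fˣ) :=
      Nat.card_congr (Equiv.subtypeEquivRight (fun x => by rw [Subgroup.mem_inf]; exact Iff.rfl))
    rw [hsetcard, myCardInf, hAcard, hH]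
    have hd0 : 0 < q - 1 := by have := hq.two_le; omega
    have hdvd : (q - 1) ∣ (q ^ r - 1) := by simpa using Nat.sub_dvd_pow_sub_pow q 1 r
    have hm : (q - 1) * ((q ^ r - 1) / (q - 1)) = q ^ r - 1 := Nat.mul_div_cancel' hdvd
    have hmain := myArith (q - 1) ((q ^ r - 1) / (q - 1)) N hd0 hN (by rw [hm]; exact hNdvd) hgcd
    rw [hm] at hmain
    exact hmain
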